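/- For λ > −1/8, J₃(λ) := ∫_{0<x₁<x₂<x₃<1} (x₂−x₁)^{4λ}(x₃−x₂)^{4λ}(x₃−x₁)^{2λ} dx = [1/((2+10λ)(3+10λ))] · Γ(1+4λ)²/Γ(2+8λ). -/

import Mathlib

open MeasureTheory Real

lemma betaReal_integrable {a b : ℝ} (ha : -1 < a) (hb : -1 < b) :
    IntervalIntegrable (fun t : ℝ => t ^ a * (1 - t) ^ b) volume 0 1 := by
  have h := Complex.betaIntegral_convergent (u := (a:ℂ) + 1) (v := (b:ℂ) + 1)
    (by simp; linarith) (by simp; linarith)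
  have h2 : IntervalIntegrable (fun x : ℝ =>
      ((x:ℂ) ^ ((a:ℂ) + 1 - 1) * ((1:ℂ) - x) ^ ((b:ℂ) + 1 - 1)).re) volume 0 1 :=
    ⟨h.1.re, h.2.re⟩
  apply h2.congr_ae
  filter_upwards [ae_restrict_mem measurableSet_uIoc] with x hx
  rw [Set.uIoc_of_le (by norm_num : (0:ℝ) ≤ 1)] at hx
  rw [show (a:ℂ) + 1 - 1 = (a:ℂ) by ring, show (b:ℂ) + 1 - 1 = (b:ℂ) by ring,
    ← Complex.ofReal_one, ← Complex.ofReal_sub,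
    ← Complex.ofReal_cpow hx.1.le, ← Complex.ofReal_cpow (by linarith [hx.2] : (0:ℝ) ≤ 1 - x),
    ← Complex.ofReal_mul, Complex.ofReal_re]

lemma betaReal_eq {a b : ℝ} (ha : -1 < a) (hb : -1 < b) :
    ∫ t in (0:ℝ)..1, t ^ a * (1 - t) ^ b
      = Real.Gamma (a + 1) * Real.Gamma (b + 1) / Real.Gamma (a + b + 2) := by
  have hu : 0 < ((a:ℂ) + 1).re := by simp; linarith
  have hv : 0 < ((b:ℂ) + 1).re := by simp; linarith
  have hbeta := Complex.Gamma_mul_Gamma_eq_betaIntegral hu hv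
  have hval : Complex.betaIntegral ((a:ℂ)+1) ((b:ℂ)+1)
      = ((∫ t in (0:ℝ)..1, t ^ a * (1 - t) ^ b : ℝ) : ℂ) := by
    rw [Complex.betaIntegral, ← intervalIntegral.integral_ofReal]
    apply intervalIntegral.integral_congr
    intro x hx
    rw [Set.uIcc_of_le (by norm_num : (0:ℝ) ≤ 1)] at hx
    dsimp only
    rw [show (a:ℂ) + 1 - 1 = (a:ℂ) by ring, show (b:ℂ) + 1 - 1 = (b:ℂ) by ring,
      ← Complex.ofReal_one, ← Complex.ofReal_sub,
      ← Complex.ofReal_cpow hx.1, ← Complex.ofReal_cpow (by linarith [hx.2] : (0:ℝ) ≤ 1 - x),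
      ← Complex.ofReal_mul]
  rw [hval] at hbeta
  have hsum : (a:ℂ) + 1 + ((b:ℂ) + 1) = ((a + b + 2 : ℝ) : ℂ) := by push_cast; ring
  rw [hsum, show ((a:ℂ) + 1) = ((a+1:ℝ):ℂ) by push_cast; ring,
    show ((b:ℂ) + 1) = ((b+1:ℝ):ℂ) by push_cast; ring,
    Complex.Gamma_ofReal, Complex.Gamma_ofReal, Complex.Gamma_ofReal,
    ← Complex.ofReal_mul, ← Complex.ofReal_mul] at hbeta
  have := Complex.ofReal_inj.mp hbeta
  have hG : 0 < Real.Gamma (a + b + 2) := Real.Gamma_pos_of_pos (by linarith)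
  field_simp
  linarith [this]

lemma scaled_beta_integrable {a b : ℝ} (ha : -1 < a) (hb : -1 < b) {c d : ℝ} (hcd : c < d) :
    IntervalIntegrable (fun x : ℝ => (x - c) ^ a * (d - x) ^ b) volume c d := by
  have hk : (0:ℝ) < d - c := by linarith
  have h0 := betaReal_integrable ha hb
  have h1 : IntervalIntegrable (fun u : ℝ => (u * (1/(d-c))) ^ a * (1 - u * (1/(d-c))) ^ b)
      volume 0 (d-c) := by
    have := h0.comp_mul_right (c := 1/(d-c))
    simpa [hk.ne'] using this
  have h2 : IntervalIntegrable
      (fun x : ℝ => ((x - c) * (1/(d-c))) ^ a * (1 - (x - c) * (1/(d-c))) ^ b) volume c d := by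
    have := h1.comp_sub_right c
    simpa using this
  have h3 := h2.const_mul ((d - c) ^ (a + b))
  apply h3.congr_ae
  filter_upwards [ae_restrict_mem measurableSet_uIoc] with x hx
  rw [Set.uIoc_of_le hcd.le] at hx
  have hxc : 0 ≤ x - c := by linarith [hx.1]
  have hdx : 0 ≤ d - x := by linarith [hx.2]
  have e1 : (x - c) * (1/(d-c)) = (x - c) / (d - c) := by ring
  have e2 : 1 - (x - c) * (1/(d-c)) = (d - x) / (d - c) := by field_simp; ring
  rw [e2, e1, Real.div_rpow hxc hk.le, Real.div_rpow hdx hk.le, Real.rpow_add hk]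
  have hda : (0:ℝ) < (d - c) ^ a := Real.rpow_pos_of_pos hk a
  have hdb : (0:ℝ) < (d - c) ^ b := Real.rpow_pos_of_pos hk b
  field_simp

lemma scaled_beta_eq {a b : ℝ} {c d : ℝ} (hcd : c < d) :
    ∫ x in c..d, (x - c) ^ a * (d - x) ^ b
      = (d - c) ^ (a + b + 1) * ∫ t in (0:ℝ)..1, t ^ a * (1 - t) ^ b := by
  have hk : (0:ℝ) < d - c := by linarith
  have step1 : ∫ x in c..d, (x - c) ^ a * (d - x) ^ b
      = ∫ u in (0:ℝ)..(d-c), u ^ a * ((d-c) - u) ^ b := by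
    rw [show (0:ℝ) = c - c by ring, show d - c = d - c from rfl]
    rw [← intervalIntegral.integral_comp_sub_right (fun u => u ^ a * ((d-c) - u) ^ b) c]
    apply intervalIntegral.integral_congr
    intro x hx
    dsimp only
    rw [show d - c - (x - c) = d - x by ring]
  have step2 : ∫ u in (0:ℝ)..(d-c), u ^ a * ((d-c) - u) ^ b
      = (d - c) ^ (a + b + 1) * ∫ t in (0:ℝ)..1, t ^ a * (1 - t) ^ b := by
    have h := intervalIntegral.smul_integral_comp_mul_right (a := (0:ℝ)) (b := 1)
      (fun u => u ^ a * ((d-c) - u) ^ b) (d - c)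
    simp only [zero_mul, one_mul] at h
    rw [← h]
    have hcg : ∫ t in (0:ℝ)..1, (fun u => u ^ a * ((d-c) - u) ^ b) (t * (d - c))
        = ∫ t in (0:ℝ)..1, (d-c) ^ (a+b) * (t ^ a * (1 - t) ^ b) := by
      apply intervalIntegral.integral_congr
      intro t ht
      rw [Set.uIcc_of_le (by norm_num : (0:ℝ) ≤ 1)] at ht
      dsimp only
      rw [Real.mul_rpow ht.1 hk.le, show (d-c) - t * (d-c) = (d-c) * (1-t) by ring,
        Real.mul_rpow hk.le (by linarith [ht.2]), Real.rpow_add hk]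
      ring
    rw [hcg, intervalIntegral.integral_const_mul, smul_eq_mul,
      Real.rpow_add_one hk.ne' (a+b)]
    ring
  rw [step1, step2]

lemma lint_Ioo {f : ℝ → ℝ} {c d : ℝ} (hcd : c ≤ d)
    (hf : IntervalIntegrable f volume c d)
    (hnn : ∀ x ∈ Set.Ioo c d, 0 ≤ f x) :
    ∫⁻ x in Set.Ioo c d, ENNReal.ofReal (f x) = ENNReal.ofReal (∫ x in c..d, f x) := by
  rw [intervalIntegral.integral_of_le hcd, integral_Ioc_eq_integral_Ioo,
    ofReal_integral_eq_lintegral_ofReal (hf.1.mono_set Set.Ioo_subset_Ioc_self)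
      ((ae_restrict_iff' measurableSet_Ioo).2 (ae_of_all _ hnn))]

lemma stepA {a e x₁ x₃ : ℝ} (ha : -1 < a) (h : x₁ < x₃) :
    ∫⁻ x₂ in Set.Ioo x₁ x₃,
        ENNReal.ofReal ((x₂ - x₁) ^ a * (x₃ - x₂) ^ a * (x₃ - x₁) ^ e)
      = ENNReal.ofReal ((x₃ - x₁) ^ (a + a + 1 + e) * ∫ t in (0:ℝ)..1, t ^ a * (1 - t) ^ a) := by
  have hint : IntervalIntegrable
      (fun x₂ => (x₂ - x₁) ^ a * (x₃ - x₂) ^ a * (x₃ - x₁) ^ e) volume x₁ x₃ :=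
    (scaled_beta_integrable ha ha h).mul_const _
  rw [lint_Ioo h.le hint (fun x hx => by
    have h1 : (0:ℝ) ≤ x - x₁ := by linarith [hx.1]
    have h2 : (0:ℝ) ≤ x₃ - x := by linarith [hx.2]
    have h3 : (0:ℝ) ≤ x₃ - x₁ := by linarith
    exact mul_nonneg (mul_nonneg (Real.rpow_nonneg h1 _) (Real.rpow_nonneg h2 _))
      (Real.rpow_nonneg h3 _))]
  congr 1
  rw [intervalIntegral.integral_mul_const, scaled_beta_eq h,
    Real.rpow_add (by linarith : (0:ℝ) < x₃ - x₁) (a + a + 1) e]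
  ring

theorem stmt7 (lam : ℝ) (hlam : -(1 / 8 : ℝ) < lam) :
    ∫ x in {y : ℝ × ℝ × ℝ | 0 < y.1 ∧ y.1 < y.2.1 ∧ y.2.1 < y.2.2 ∧ y.2.2 < 1},
        (x.2.1 - x.1) ^ (4 * lam) * (x.2.2 - x.2.1) ^ (4 * lam) *
          (x.2.2 - x.1) ^ (2 * lam)
      = 1 / ((2 + 10 * lam) * (3 + 10 * lam)) *
          (Real.Gamma (1 + 4 * lam) ^ 2 / Real.Gamma (2 + 8 * lam)) := by
  have ha : (-1:ℝ) < 4 * lam := by linarith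
  have hq : (-1:ℝ) < 10 * lam + 1 := by linarith
  have hq1 : (0:ℝ) < 10 * lam + 2 := by linarith
  have hq2 : (0:ℝ) < 10 * lam + 3 := by linarith
  set a : ℝ := 4 * lam with ha_def
  set q : ℝ := 10 * lam + 1 with hq_def
  set I : ℝ := ∫ t in (0:ℝ)..1, t ^ a * (1 - t) ^ a with hI_def
  have hInn : 0 ≤ I := by
    rw [hI_def]
    apply intervalIntegral.integral_nonneg (by norm_num)
    intro x hx
    exact mul_nonneg (Real.rpow_nonneg hx.1 _) (Real.rpow_nonneg (by linarith [hx.2]) _)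
  set s : Set (ℝ × ℝ × ℝ) := {y | 0 < y.1 ∧ y.1 < y.2.1 ∧ y.2.1 < y.2.2 ∧ y.2.2 < 1}
    with hs_def
  have hs : MeasurableSet s := by
    show MeasurableSet ({y : ℝ × ℝ × ℝ | 0 < y.1} ∩ ({y | y.1 < y.2.1} ∩
      ({y | y.2.1 < y.2.2} ∩ {y | y.2.2 < 1})))
    exact (measurableSet_lt measurable_const (by fun_prop)).inter
      ((measurableSet_lt (by fun_prop) (by fun_prop)).inter
        ((measurableSet_lt (by fun_prop) (by fun_prop)).inter
          (measurableSet_lt (by fun_prop) measurable_const)))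
  set F : ℝ × ℝ × ℝ → ℝ :=
    fun x => (x.2.1 - x.1) ^ a * (x.2.2 - x.2.1) ^ a * (x.2.2 - x.1) ^ (2 * lam) with hF_def
  have hF : Measurable F := by rw [hF_def]; fun_prop
  have hFnn : 0 ≤ᵐ[volume.restrict s] F := by
    refine (ae_restrict_iff' hs).2 (ae_of_all _ fun x hx => ?_)
    obtain ⟨h1, h2, h3, h4⟩ := hx
    exact mul_nonneg (mul_nonneg (Real.rpow_nonneg (by linarith) _)
      (Real.rpow_nonneg (by linarith) _)) (Real.rpow_nonneg (by linarith) _)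
  rw [integral_eq_lintegral_of_nonneg_ae hFnn hF.aestronglyMeasurable]
  have hmi : Measurable (s.indicator fun x => ENNReal.ofReal (F x)) :=
    (hF.ennreal_ofReal).indicator hs
  have hL : ∫⁻ x, ENNReal.ofReal (F x) ∂(volume.restrict s)
      = ENNReal.ofReal (1 / (q + 2) * (I / (q + 1))) := by
    rw [← lintegral_indicator hs]
    rw [show (volume : Measure (ℝ × ℝ × ℝ))
        = (volume : Measure ℝ).prod (volume : Measure (ℝ × ℝ)) from Measure.volume_eq_prod _ _]
    rw [lintegral_prod _ hmi.aemeasurable]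
    have key1 : ∀ x₁ : ℝ, ∫⁻ p : ℝ × ℝ, s.indicator (fun x => ENNReal.ofReal (F x)) (x₁, p)
        = (Set.Ioo (0:ℝ) 1).indicator
            (fun t => ENNReal.ofReal ((1 - t) ^ (q + 1) * (I / (q + 1)))) x₁ := by
      intro x₁
      rw [show (volume : Measure (ℝ × ℝ))
          = (volume : Measure ℝ).prod (volume : Measure ℝ) from Measure.volume_eq_prod _ _]
      rw [lintegral_prod_symm (fun p : ℝ × ℝ => s.indicator (fun x => ENNReal.ofReal (F x)) (x₁, p))
        ((hmi.comp (measurable_prodMk_left (x := x₁))).aemeasurable)]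
      by_cases hx₁ : 0 < x₁ ∧ x₁ < 1
      · rw [Set.indicator_of_mem (Set.mem_Ioo.2 hx₁)]
        have inner : ∀ x₃ : ℝ,
            (∫⁻ x₂, s.indicator (fun x => ENNReal.ofReal (F x)) (x₁, (x₂, x₃)))
            = (Set.Ioo x₁ 1).indicator
                (fun u => ENNReal.ofReal ((u - x₁) ^ q * I)) x₃ := by
          intro x₃
          by_cases hx₃ : x₁ < x₃ ∧ x₃ < 1
          · rw [Set.indicator_of_mem (Set.mem_Ioo.2 hx₃)]
            have hfun : (fun x₂ => s.indicator (fun x => ENNReal.ofReal (F x)) (x₁, (x₂, x₃)))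
                = (Set.Ioo x₁ x₃).indicator
                    (fun x₂ => ENNReal.ofReal
                      ((x₂ - x₁) ^ a * (x₃ - x₂) ^ a * (x₃ - x₁) ^ (2 * lam))) := by
              funext x₂
              simp only [hs_def, hF_def, Set.indicator_apply, Set.mem_setOf_eq, Set.mem_Ioo]
              by_cases h : x₁ < x₂ ∧ x₂ < x₃
              · simp [h.1, h.2, hx₁.1, hx₃.2]
              · rw [not_and_or] at h
                rcases h with h | h <;> simp [h, hx₁.1, hx₃.2]
            rw [hfun, lintegral_indicator measurableSet_Ioo, stepA ha hx₃.1, ← hI_def,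
              show a + a + 1 + 2 * lam = q by rw [ha_def, hq_def]; ring]
          · rw [Set.indicator_of_notMem (by simpa [Set.mem_Ioo] using hx₃)]
            have hz : ∀ x₂ : ℝ,
                s.indicator (fun x => ENNReal.ofReal (F x)) (x₁, (x₂, x₃)) = 0 := by
              intro x₂
              apply Set.indicator_of_notMem
              rintro ⟨h1, h2, h3, h4⟩
              exact hx₃ ⟨lt_trans h2 h3, h4⟩
            simp [hz]
        rw [lintegral_congr inner, lintegral_indicator measurableSet_Ioo]
        have hint : IntervalIntegrable (fun u : ℝ => (u - x₁) ^ q * I) volume x₁ 1 := by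
          have h0 : IntervalIntegrable (fun u : ℝ => u ^ q) volume 0 (1 - x₁) :=
            intervalIntegral.intervalIntegrable_rpow' hq
          have := (h0.comp_sub_right x₁).mul_const I
          simpa using this
        rw [lint_Ioo hx₁.2.le hint (fun u hu => mul_nonneg
          (Real.rpow_nonneg (by linarith [hu.1]) _) hInn)]
        congr 1
        rw [intervalIntegral.integral_mul_const,
          show ∫ u in x₁..1, (u - x₁) ^ q = ∫ u in x₁ - x₁..1 - x₁, u ^ q from
            intervalIntegral.integral_comp_sub_right (fun u => u ^ q) x₁,
          sub_self, integral_rpow (Or.inl hq),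
          Real.zero_rpow (by linarith : (0:ℝ) < q + 1).ne']
        ring
      · rw [Set.indicator_of_notMem (by simpa [Set.mem_Ioo] using hx₁)]
        have hz : ∀ x₃ x₂ : ℝ,
            s.indicator (fun x => ENNReal.ofReal (F x)) (x₁, (x₂, x₃)) = 0 := by
          intro x₃ x₂
          apply Set.indicator_of_notMem
          rintro ⟨h1, h2, h3, h4⟩
          exact hx₁ ⟨h1, by linarith⟩
        simp [hz]
    rw [lintegral_congr key1, lintegral_indicator measurableSet_Ioo]
    have hint2 : IntervalIntegrable
        (fun t : ℝ => (1 - t) ^ (q + 1) * (I / (q + 1))) volume 0 1 := by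
      have h0 : IntervalIntegrable (fun u : ℝ => u ^ (q + 1)) volume 0 1 :=
        intervalIntegral.intervalIntegrable_rpow' (by linarith : (-1:ℝ) < q + 1)
      have := ((h0.comp_sub_left 1).symm).mul_const (I / (q + 1))
      simpa using this
    rw [lint_Ioo (by norm_num) hint2 (fun t ht => mul_nonneg
      (Real.rpow_nonneg (by linarith [ht.2]) _)
      (div_nonneg hInn (by linarith : (0:ℝ) ≤ q + 1)))]
    congr 1
    rw [intervalIntegral.integral_mul_const,
      intervalIntegral.integral_comp_sub_left (fun u => u ^ (q + 1)) 1,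
      show (1:ℝ) - 1 = 0 by norm_num, show (1:ℝ) - 0 = 1 by norm_num,
      integral_rpow (Or.inl (by linarith : (-1:ℝ) < q + 1)),
      Real.one_rpow, Real.zero_rpow (by linarith : (0:ℝ) < q + 1 + 1).ne',
      show q + 1 + 1 = q + 2 by ring]
    ring
  rw [hL, ENNReal.toReal_ofReal (mul_nonneg (div_nonneg zero_le_one (by linarith))
    (div_nonneg hInn (by linarith)))]
  rw [hI_def, betaReal_eq ha ha,
    show a + 1 = 1 + 4 * lam by rw [ha_def]; ring,
    show a + a + 2 = 2 + 8 * lam by rw [ha_def]; ring, hq_def, sq]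
  have hG : 0 < Real.Gamma (2 + 8 * lam) := Real.Gamma_pos_of_pos (by linarith)
  rw [ha_def]
  field_simp
  ring
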